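/- Let a be a nonzero integral ideal of O_K with a⁻¹ = (1/k)·b where k is the minimal positive integer such that k·a⁻¹ is integral and b = k·a⁻¹ ⊆ O_K. Then k ≤ N(a) and N(b) ≤ N(a)^(d-1), where d is the degree of K over Q. -/

import Mathlib

open scoped nonZeroDivisors
open NumberField FractionalIdeal

/-- Let `a` be a nonzero integral ideal, `k` the minimal positive integer such that
`k · a⁻¹` is integral, and `b = k · a⁻¹ ⊆ 𝓞 K`.  Then `k ≤ N(a)` and
`N(b) ≤ N(a)^(d-1)` where `d = [K : ℚ]`. -/
theorem stmt_3 (K : Type*) [Field K] [NumberField K]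
    (a : Ideal (𝓞 K)) (ha : a ≠ 0) (k : ℕ) (hk : 0 < k)
    (hint : spanSingleton (𝓞 K)⁰ (k : K) * (a : FractionalIdeal (𝓞 K)⁰ K)⁻¹ ≤ 1)
    (hmin : ∀ m : ℕ, 0 < m →
      spanSingleton (𝓞 K)⁰ (m : K) * (a : FractionalIdeal (𝓞 K)⁰ K)⁻¹ ≤ 1 → k ≤ m)
    (b : Ideal (𝓞 K))
    (hb : (b : FractionalIdeal (𝓞 K)⁰ K) =
      spanSingleton (𝓞 K)⁰ (k : K) * (a : FractionalIdeal (𝓞 K)⁰ K)⁻¹) :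
    k ≤ Ideal.absNorm a ∧
      Ideal.absNorm b ≤ (Ideal.absNorm a) ^ (Module.finrank ℚ K - 1) := by
  have haF : (a : FractionalIdeal (𝓞 K)⁰ K) ≠ 0 := by
    simpa using ha
  have hNa : 0 < Ideal.absNorm a := Nat.pos_of_ne_zero (by
    rw [Ne, Ideal.absNorm_eq_zero_iff]; exact ha)
  -- k ≤ N(a)
  have hspan : spanSingleton (𝓞 K)⁰ ((Ideal.absNorm a : ℕ) : K)
      = ((Ideal.span {((Ideal.absNorm a : ℕ) : 𝓞 K)} : Ideal (𝓞 K)) :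
        FractionalIdeal (𝓞 K)⁰ K) := by
    rw [coeIdeal_span_singleton]
    norm_num
  have hle : spanSingleton (𝓞 K)⁰ ((Ideal.absNorm a : ℕ) : K) *
      (a : FractionalIdeal (𝓞 K)⁰ K)⁻¹ ≤ 1 := by
    have h1 : (Ideal.span {((Ideal.absNorm a : ℕ) : 𝓞 K)} : Ideal (𝓞 K)) ≤ a := by
      rw [Ideal.span_singleton_le_iff_mem]
      exact_mod_cast a.absNorm_mem
    calc spanSingleton (𝓞 K)⁰ ((Ideal.absNorm a : ℕ) : K) *
        (a : FractionalIdeal (𝓞 K)⁰ K)⁻¹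
        ≤ (a : FractionalIdeal (𝓞 K)⁰ K) * (a : FractionalIdeal (𝓞 K)⁰ K)⁻¹ := by
          refine mul_le_mul_left ?_ _
          rw [hspan]
          exact coeIdeal_le_coeIdeal K |>.mpr h1
      _ = 1 := mul_inv_cancel₀ haF
  have hkNa : k ≤ Ideal.absNorm a := hmin _ hNa hle
  refine ⟨hkNa, ?_⟩
  -- b * a = span k
  have hba : b * a = Ideal.span {(k : 𝓞 K)} := by
    apply coeIdeal_injective (K := K)
    push_cast [hb]
    rw [mul_assoc, inv_mul_cancel₀ haF, mul_one, coeIdeal_span_singleton]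
    norm_num
  have hnorm : Ideal.absNorm b * Ideal.absNorm a = k ^ Module.finrank ℚ K := by
    rw [← Ideal.absNorm.map_mul, hba, Ideal.absNorm_span_singleton]
    have : ((k : 𝓞 K)) = algebraMap ℤ (𝓞 K) (k : ℤ) := by push_cast; ring
    rw [this, Algebra.norm_algebraMap_of_basis (RingOfIntegers.basis K)]
    have hcard : Fintype.card (Module.Free.ChooseBasisIndex ℤ (𝓞 K)) = Module.finrank ℚ K := by
      rw [← RingOfIntegers.rank K, Module.finrank_eq_card_chooseBasisIndex]
    rw [hcard]
    simp [Int.natAbs_pow]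
  have hd : 1 ≤ Module.finrank ℚ K := Module.finrank_pos
  have : Ideal.absNorm b * Ideal.absNorm a ≤
      Ideal.absNorm a ^ (Module.finrank ℚ K - 1) * Ideal.absNorm a := by
    rw [hnorm, ← pow_succ, Nat.sub_add_cancel hd]
    exact Nat.pow_le_pow_left hkNa _
  exact Nat.le_of_mul_le_mul_right this hNa
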